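/- Let α_1, α_2, α_3, α_4 be odd integers greater than 1, define n_1 = (α_2−1)(α_3−1)α_4 + α_2, n_2 = (α_3−1)(α_4−1)α_1 + α_3, n_3 = (α_4−1)(α_1−1)α_2 + α_4, n_4 = (α_1−1)(α_2−1)α_3 + α_1, and assume gcd(n_1, n_2, n_3, n_4) = 1. Let S be the numerical semigroup generated by n_1, n_2, n_3, n_4 and set f = (α_2−1)n_2 − n_1. Then PF(S) = {f, 2f, 3f}; in particular F(S) = 3f and 2f = (α_2−2)n_2 + (α_3−1)n_3 − n_1. -/

import Mathlib

set_option maxHeartbeats 1600000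

lemma aux_mem_closure4 (n1 n2 n3 n4 x : ℕ) :
    x ∈ (AddSubmonoid.closure ({n1, n2, n3, n4} : Set ℕ) : Set ℕ) ↔
    ∃ p q r s : ℕ, x = p*n1+q*n2+r*n3+s*n4 := by
  constructor
  · intro h
    induction h using AddSubmonoid.closure_induction with
    | mem a ha =>
        rcases ha with h|h|h|h
        · exact ⟨1,0,0,0, by simp [h]⟩
        · exact ⟨0,1,0,0, by simp [h]⟩
        · exact ⟨0,0,1,0, by simp [h]⟩
        · exact ⟨0,0,0,1, by simp [Set.mem_singleton_iff.mp h]⟩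
    | zero => exact ⟨0,0,0,0, by simp⟩
    | add a b ha hb iha ihb =>
        obtain ⟨p,q,r,s,rfl⟩ := iha
        obtain ⟨p',q',r',s',rfl⟩ := ihb
        exact ⟨p+p',q+q',r+r',s+s', by ring⟩
  · rintro ⟨p,q,r,s,rfl⟩
    have h1 : n1 ∈ AddSubmonoid.closure ({n1,n2,n3,n4} : Set ℕ) :=
      AddSubmonoid.subset_closure (by simp)
    have h2 : n2 ∈ AddSubmonoid.closure ({n1,n2,n3,n4} : Set ℕ) :=
      AddSubmonoid.subset_closure (by simp)
    have h3 : n3 ∈ AddSubmonoid.closure ({n1,n2,n3,n4} : Set ℕ) :=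
      AddSubmonoid.subset_closure (by simp)
    have h4 : n4 ∈ AddSubmonoid.closure ({n1,n2,n3,n4} : Set ℕ) :=
      AddSubmonoid.subset_closure (by simp)
    set M := AddSubmonoid.closure ({n1,n2,n3,n4} : Set ℕ)
    exact M.add_mem (M.add_mem (M.add_mem
      (by simpa [nsmul_eq_mul] using M.nsmul_mem h1 p)
      (by simpa [nsmul_eq_mul] using M.nsmul_mem h2 q))
      (by simpa [nsmul_eq_mul] using M.nsmul_mem h3 r))
      (by simpa [nsmul_eq_mul] using M.nsmul_mem h4 s)


lemma aux_lemB (A1 A2 A3 A4 b c d x y z : ℤ)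
    (hA1 : 2 ≤ A1) (hA2 : 2 ≤ A2) (hA3 : 2 ≤ A3) (hA4 : 2 ≤ A4)
    (hb0 : 0 ≤ b) (hb1 : b ≤ A2 - 1) (hc0 : 0 ≤ c) (hc1 : c ≤ A3 - 1)
    (hd0 : 0 ≤ d) (hd1 : d ≤ A4 - 1)
    (hcd : c = A3 - 1 → d = 0) (hbc : b = A2 - 1 → c = 0 ∧ d = 0)
    (e1 : 1 ≤ A1*x - y) (e2 : 0 ≤ b - (A2-1)*x + A2*y - z)
    (e3 : 0 ≤ c - (A3-1)*y + A3*z) (e4 : 0 ≤ d - x - (A4-1)*z) : False := by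
  rcases le_or_gt 1 y with hy | hy
  · -- y ≥ 1
    have hx : 1 ≤ x := by
      by_contra h
      push_neg at h
      have h2 : A1 * x ≤ 0 := by
        have := mul_nonneg (show (0:ℤ) ≤ A1 by linarith) (show (0:ℤ) ≤ -x by linarith)
        linarith
      linarith
    have hz : z ≤ 0 := by
      by_contra h
      push_neg at h
      have := mul_le_mul_of_nonneg_left (show (1:ℤ) ≤ z by linarith)
        (show (0:ℤ) ≤ A4 - 1 by linarith)
      nlinarith
    have hA3z : A3 * z ≤ 0 := by
      have := mul_nonneg (show (0:ℤ) ≤ A3 by linarith) (show (0:ℤ) ≤ -z by linarith)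
      linarith
    have hy1 : y = 1 := by
      by_contra h
      have h2 : 2 ≤ y := by omega
      have := mul_le_mul_of_nonneg_left h2 (show (0:ℤ) ≤ A3 - 1 by linarith)
      nlinarith
    subst hy1
    have hz0 : z = 0 := by
      by_contra h
      have h2 : z ≤ -1 := by omega
      have := mul_le_mul_of_nonneg_left h2 (show (0:ℤ) ≤ A3 by linarith)
      nlinarith
    subst hz0
    have hc : c = A3 - 1 := by
      have : A3 - 1 ≤ c := by nlinarith
      linarith
    have hd := hcd hc
    subst hd
    nlinarith
  · -- y ≤ 0
    have hy0 : y ≤ 0 := by linarith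
    have hzy : y ≤ z := by
      by_contra h
      push_neg at h
      have h' : z ≤ y - 1 := by omega
      have := mul_le_mul_of_nonneg_left h' (show (0:ℤ) ≤ A3 by linarith)
      nlinarith
    have hxy : A2*x - x - A2*y + y ≤ b := by nlinarith
    have hxy2 : x - y ≤ 1 := by
      by_contra h
      push_neg at h
      have h' : (2:ℤ) ≤ x - y := by omega
      have := mul_le_mul_of_nonneg_left h' (show (0:ℤ) ≤ A2 - 1 by linarith)
      nlinarith
    rcases le_or_gt 1 x with hx | hx
    · have hy' : y = 0 := by linarith
      have hx' : x = 1 := by linarith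
      subst hy'; subst hx'
      have hb : b = A2 - 1 := by
        have : A2 - 1 ≤ b := by linarith
        linarith
      obtain ⟨hc', hd'⟩ := hbc hb
      subst hc'; subst hd'
      have hz0 : 0 ≤ z := by
        by_contra h
        push_neg at h
        have h' : z ≤ -1 := by omega
        have := mul_le_mul_of_nonneg_left h' (show (0:ℤ) ≤ A3 by linarith)
        nlinarith
      have := mul_nonneg (show (0:ℤ) ≤ A4 - 1 by linarith) hz0
      nlinarith
    · have hx0 : x ≤ 0 := by linarith
      have h5 : 0 ≤ A1*x - x := by linarith
      have hx' : x = 0 := by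
        by_contra h
        have h2 : x ≤ -1 := by omega
        have := mul_le_mul_of_nonpos_right hA1 (show x ≤ 0 by omega)
        nlinarith
      subst hx'
      have hy' : y = -1 := by
        have h6 : y ≤ -1 := by nlinarith
        linarith
      subst hy'
      have hb : b = A2 - 1 := by
        have : A2 - 1 ≤ b := by linarith
        linarith
      obtain ⟨hc', hd'⟩ := hbc hb
      subst hc'; subst hd'
      have hz0 : 0 ≤ z := by
        by_contra h
        push_neg at h
        have h' : z ≤ -1 := by omega
        have := mul_le_mul_of_nonneg_left h' (show (0:ℤ) ≤ A3 by linarith)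
        nlinarith
      have hz1 : z ≤ 0 := by
        by_contra h
        push_neg at h
        have h' : (1:ℤ) ≤ z := by omega
        have := mul_le_mul_of_nonneg_left h' (show (0:ℤ) ≤ A4 - 1 by linarith)
        nlinarith
      have hz' : z = 0 := le_antisymm hz1 hz0
      subst hz'
      nlinarith

lemma aux_lemC_aux (A2 A3 A4 b c d b' c' d' x y z : ℤ)
    (hA2 : 2 ≤ A2) (hA3 : 2 ≤ A3) (hA4 : 2 ≤ A4)
    (hb0 : 0 ≤ b) (hb1 : b ≤ A2 - 1) (hc0 : 0 ≤ c) (hc1 : c ≤ A3 - 1)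
    (hd0 : 0 ≤ d) (hd1 : d ≤ A4 - 1)
    (hcd : c = A3 - 1 → d = 0) (hbc : b = A2 - 1 → c = 0 ∧ d = 0)
    (hb0' : 0 ≤ b') (hb1' : b' ≤ A2 - 1) (hc0' : 0 ≤ c') (hc1' : c' ≤ A3 - 1)
    (hd0' : 0 ≤ d') (hd1' : d' ≤ A4 - 1)
    (hcd' : c' = A3 - 1 → d' = 0) (hbc' : b' = A2 - 1 → c' = 0 ∧ d' = 0)
    (e2 : b - b' = -(A2-1)*x + A2*y - z)
    (e3 : c - c' = -(A3-1)*y + A3*z)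
    (e4 : d - d' = -x - (A4-1)*z)
    (hz : 0 ≤ z) :
    b = b' ∧ c = c' ∧ d = d' := by
  rcases le_or_gt 1 z with hz1 | hz1
  · -- z ≥ 1 : contradiction
    exfalso
    have hy1 : 1 ≤ y := by
      by_contra h
      push_neg at h
      have h' : y ≤ 0 := by omega
      have h1 := mul_nonneg (show (0:ℤ) ≤ A3 - 1 by linarith) (show (0:ℤ) ≤ -y by linarith)
      have h2 := mul_le_mul_of_nonneg_left hz1 (show (0:ℤ) ≤ A3 by linarith)
      nlinarith
    have hyz : z ≤ y := by
      by_contra h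
      push_neg at h
      have h' : y ≤ z - 1 := by omega
      have := mul_le_mul_of_nonneg_left h' (show (0:ℤ) ≤ A3 - 1 by linarith)
      nlinarith
    have hx1 : y - 1 ≤ x := by
      by_contra h
      push_neg at h
      have h' : x ≤ y - 2 := by omega
      have := mul_le_mul_of_nonneg_left h' (show (0:ℤ) ≤ A2 - 1 by linarith)
      nlinarith
    have hx0 : x ≤ 0 := by nlinarith
    have hzv : z = 1 := by linarith
    have hyv : y = 1 := by linarith
    have hxv : x = 0 := by linarith
    subst hzv; subst hyv; subst hxv
    have hbv : b = A2 - 1 := by linarith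
    obtain ⟨hcv, hdv⟩ := hbc hbv
    linarith
  · -- z = 0
    have hzv : z = 0 := by linarith
    subst hzv
    have hyb1 : y ≤ 1 := by
      by_contra h
      push_neg at h
      have h' : (2:ℤ) ≤ y := by omega
      have := mul_le_mul_of_nonneg_left h' (show (0:ℤ) ≤ A3 - 1 by linarith)
      nlinarith
    have hyb2 : -1 ≤ y := by
      by_contra h
      push_neg at h
      have h' : y ≤ -2 := by omega
      have := mul_le_mul_of_nonpos_right (show (2:ℤ) ≤ A3 - 1 + 1 by linarith) (show y ≤ 0 by omega)
      -- fallback; we'll just nlinarith with product hint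
      nlinarith [mul_le_mul_of_nonneg_left (show y ≤ -2 by omega) (show (0:ℤ) ≤ A3 - 1 by linarith)]
    have hy3 : y = -1 ∨ y = 0 ∨ y = 1 := by omega
    rcases hy3 with hyv | hyv | hyv
    · exfalso
      subst hyv
      have hcv : c = A3 - 1 := by linarith
      obtain hdv := hcd hcv
      subst hdv
      have hxv : 0 ≤ x := by linarith
      have := mul_nonneg (show (0:ℤ) ≤ A2 - 1 by linarith) hxv
      nlinarith
    · subst hyv
      rcases lt_trichotomy x 0 with hxv | hxv | hxv
      · exfalso
        have h' : x ≤ -1 := by omega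
        have h1 := mul_le_mul_of_nonneg_left h' (show (0:ℤ) ≤ A2 - 1 by linarith)
        have hbv : b = A2 - 1 := by nlinarith
        obtain ⟨hcv, hdv⟩ := hbc hbv
        have hxv' : x = -1 := by nlinarith
        subst hxv'
        simp at e4
        omega
      · subst hxv
        refine ⟨by linarith, by linarith, by linarith⟩
      · exfalso
        have h' : (1:ℤ) ≤ x := by omega
        have h1 := mul_le_mul_of_nonneg_left h' (show (0:ℤ) ≤ A2 - 1 by linarith)
        have hbv : b' = A2 - 1 := by nlinarith
        obtain ⟨hcv, hdv⟩ := hbc' hbv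
        have hxv' : x = 1 := by nlinarith
        subst hxv'
        simp at e4
        omega
    · exfalso
      subst hyv
      have hcv : c' = A3 - 1 := by linarith
      obtain hdv := hcd' hcv
      subst hdv
      have hxv : x ≤ 0 := by linarith
      have := mul_nonneg (show (0:ℤ) ≤ A2 - 1 by linarith) (show (0:ℤ) ≤ -x by linarith)
      nlinarith

lemma aux_lemC (A2 A3 A4 b c d b' c' d' x y z : ℤ)
    (hA2 : 2 ≤ A2) (hA3 : 2 ≤ A3) (hA4 : 2 ≤ A4)
    (hb0 : 0 ≤ b) (hb1 : b ≤ A2 - 1) (hc0 : 0 ≤ c) (hc1 : c ≤ A3 - 1)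
    (hd0 : 0 ≤ d) (hd1 : d ≤ A4 - 1)
    (hcd : c = A3 - 1 → d = 0) (hbc : b = A2 - 1 → c = 0 ∧ d = 0)
    (hb0' : 0 ≤ b') (hb1' : b' ≤ A2 - 1) (hc0' : 0 ≤ c') (hc1' : c' ≤ A3 - 1)
    (hd0' : 0 ≤ d') (hd1' : d' ≤ A4 - 1)
    (hcd' : c' = A3 - 1 → d' = 0) (hbc' : b' = A2 - 1 → c' = 0 ∧ d' = 0)
    (e2 : b - b' = -(A2-1)*x + A2*y - z)
    (e3 : c - c' = -(A3-1)*y + A3*z)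
    (e4 : d - d' = -x - (A4-1)*z) :
    b = b' ∧ c = c' ∧ d = d' := by
  rcases le_or_gt 0 z with hz | hz
  · exact aux_lemC_aux A2 A3 A4 b c d b' c' d' x y z hA2 hA3 hA4 hb0 hb1 hc0 hc1 hd0 hd1
      hcd hbc hb0' hb1' hc0' hc1' hd0' hd1' hcd' hbc' e2 e3 e4 hz
  · obtain ⟨h1, h2, h3⟩ := aux_lemC_aux A2 A3 A4 b' c' d' b c d (-x) (-y) (-z)
      hA2 hA3 hA4 hb0' hb1' hc0' hc1' hd0' hd1' hcd' hbc' hb0 hb1 hc0 hc1 hd0 hd1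
      hcd hbc (by linarith) (by linarith) (by linarith) (by linarith)
    exact ⟨h1.symm, h2.symm, h3.symm⟩

lemma aux_lattice (A1 A2 A3 A4 N1 N2 N3 N4 : ℤ)
    (hN1 : N1 = (A2-1)*(A3-1)*A4 + A2) (hN2 : N2 = (A3-1)*(A4-1)*A1 + A3)
    (hN3 : N3 = (A4-1)*(A1-1)*A2 + A4) (hN4 : N4 = (A1-1)*(A2-1)*A3 + A1)
    (hN4pos : N4 ≠ 0) (hcop : IsCoprime N4 N3)
    (x1 x2 x3 x4 : ℤ) (h : x1*N1 + x2*N2 + x3*N3 + x4*N4 = 0) :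
    ∃ x y z : ℤ, x1 = A1*x - y ∧ x2 = -(A2-1)*x + A2*y - z ∧
      x3 = -(A3-1)*y + A3*z ∧ x4 = -x - (A4-1)*z := by
  have rel2 : A2*N2 - (A3-1)*N3 - N1 = 0 := by rw [hN1, hN2, hN3]; ring
  have rel3 : A3*N3 - (A4-1)*N4 - N2 = 0 := by rw [hN2, hN3, hN4]; ring
  have hw : (x3 - (A3-1)*x1 + A3*(x2 + A2*x1))*N3 + (x4 - (A4-1)*(x2 + A2*x1))*N4 = 0 := by
    linear_combination h + x1*rel2 + (x2 + A2*x1)*rel3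
  set w3 := x3 - (A3-1)*x1 + A3*(x2 + A2*x1) with hw3def
  set w4 := x4 - (A4-1)*(x2 + A2*x1) with hw4def
  have hdvd : N4 ∣ w3 := hcop.dvd_of_dvd_mul_right ⟨-w4, by linarith⟩
  obtain ⟨t, ht⟩ := hdvd
  have h0 : N4 * (t*N3 + w4) = 0 := by linear_combination hw - N3*ht
  have hw4' : w4 = -(t*N3) := by
    rcases mul_eq_zero.mp h0 with h' | h'
    · exact absurd h' hN4pos
    · linarith
  refine ⟨t, t*A1 - x1, t*(A1*A2 - A2 + 1) - (x2 + A2*x1), by ring, by ring, ?_, ?_⟩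
  · have hwe : x3 - (A3-1)*x1 + A3*(x2 + A2*x1) = N4 * t := ht
    linear_combination hwe + t*hN4
  · have hwe : x4 - (A4-1)*(x2 + A2*x1) = -(t*N3) := hw4'
    linear_combination hwe - t*hN3



/-- A numerical semigroup: an additive submonoid of `ℕ` with finite complement. -/
structure NumericalSemigroup where
  carrier : Set ℕ
  zero_mem : 0 ∈ carrier
  add_mem : ∀ {a b : ℕ}, a ∈ carrier → b ∈ carrier → a + b ∈ carrier
  cofinite : Set.Finite carrierᶜ

namespace NumericalSemigroup

/-- The set of pseudo-Frobenius numbers of `S`. -/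
def PF (S : NumericalSemigroup) : Set ℕ :=
  {f | f ∉ S.carrier ∧ ∀ s ∈ S.carrier, s ≠ 0 → f + s ∈ S.carrier}

/-- The Frobenius number of `S` (the maximum of the complement). -/
noncomputable def frob (S : NumericalSemigroup) : ℕ := sSup S.carrierᶜ

/-- The genus of `S`: the number of gaps. -/
noncomputable def genus (S : NumericalSemigroup) : ℕ := S.carrierᶜ.ncard

/-- The type of `S`: the number of pseudo-Frobenius numbers. -/
noncomputable def typ (S : NumericalSemigroup) : ℕ := S.PF.ncard

/-- `S` is almost symmetric if `2 g(S) = F(S) + t(S)`. -/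
def AlmostSymmetric (S : NumericalSemigroup) : Prop :=
  2 * S.genus = S.frob + S.typ

/-- `S` is pseudo-symmetric if `2 g(S) = F(S) + 2`. -/
def PseudoSymmetric (S : NumericalSemigroup) : Prop :=
  2 * S.genus = S.frob + 2

/-- `S` is minimally generated by the four (distinct) elements `n1, n2, n3, n4`. -/
def MinGen4 (S : NumericalSemigroup) (n1 n2 n3 n4 : ℕ) : Prop :=
  [n1, n2, n3, n4].Pairwise (· ≠ ·) ∧
  S.carrier = (AddSubmonoid.closure ({n1, n2, n3, n4} : Set ℕ) : Set ℕ) ∧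
  ∀ B ⊂ ({n1, n2, n3, n4} : Set ℕ),
    S.carrier ≠ (AddSubmonoid.closure B : Set ℕ)

end NumericalSemigroup

/-- `alphaMin x a b c` is `min {k ≥ 1 : k·x ∈ ⟨a, b, c⟩}`. -/
noncomputable def alphaMin (x a b c : ℕ) : ℕ :=
  sInf {k : ℕ | 1 ≤ k ∧ (k * x) ∈ (AddSubmonoid.closure ({a, b, c} : Set ℕ) : Set ℕ)}

/-- With the construction of Theorem `construction`, setting `f = (α₂−1)n₂ − n₁`, the
pseudo-Frobenius numbers of the resulting semigroup are `{f, 2f, 3f}`; in particular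
`F(S) = 3f` and `2f = (α₂−2)n₂ + (α₃−1)n₃ − n₁`. -/
theorem PF_of_constructed_almostSymmetric_type_three
    (α1 α2 α3 α4 : ℕ)
    (ho1 : Odd α1) (ho2 : Odd α2) (ho3 : Odd α3) (ho4 : Odd α4)
    (hg1 : 1 < α1) (hg2 : 1 < α2) (hg3 : 1 < α3) (hg4 : 1 < α4)
    (n1 n2 n3 n4 : ℕ)
    (hn1 : n1 = (α2 - 1) * (α3 - 1) * α4 + α2)
    (hn2 : n2 = (α3 - 1) * (α4 - 1) * α1 + α3)
    (hn3 : n3 = (α4 - 1) * (α1 - 1) * α2 + α4)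
    (hn4 : n4 = (α1 - 1) * (α2 - 1) * α3 + α1)
    (hgcd : Nat.gcd (Nat.gcd (Nat.gcd n1 n2) n3) n4 = 1)
    (S : NumericalSemigroup)
    (hS : S.carrier = (AddSubmonoid.closure ({n1, n2, n3, n4} : Set ℕ) : Set ℕ))
    (f : ℕ) (hf : (f : ℤ) = ((α2 : ℤ) - 1) * n2 - n1) :
    S.PF = {f, 2 * f, 3 * f} ∧ S.frob = 3 * f ∧
      2 * (f : ℤ) = ((α2 : ℤ) - 2) * n2 + ((α3 : ℤ) - 1) * n3 - n1 := by
  -- === basic bounds ===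
  have hA1 : 3 ≤ α1 := by have := Nat.odd_iff.mp ho1; omega
  have hA2 : 3 ≤ α2 := by have := Nat.odd_iff.mp ho2; omega
  have hA3 : 3 ≤ α3 := by have := Nat.odd_iff.mp ho3; omega
  have hA4 : 3 ≤ α4 := by have := Nat.odd_iff.mp ho4; omega
  have cA1 : (3:ℤ) ≤ (α1:ℤ) := by exact_mod_cast hA1
  have cA2 : (3:ℤ) ≤ (α2:ℤ) := by exact_mod_cast hA2
  have cA3 : (3:ℤ) ≤ (α3:ℤ) := by exact_mod_cast hA3
  have cA4 : (3:ℤ) ≤ (α4:ℤ) := by exact_mod_cast hA4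
  -- cast identities for the generators
  have hN1 : (n1:ℤ) = ((α2:ℤ)-1)*((α3:ℤ)-1)*(α4:ℤ) + (α2:ℤ) := by
    rw [hn1]
    push_cast [Nat.cast_sub (show 1 ≤ α2 by omega), Nat.cast_sub (show 1 ≤ α3 by omega)]
    ring
  have hN2 : (n2:ℤ) = ((α3:ℤ)-1)*((α4:ℤ)-1)*(α1:ℤ) + (α3:ℤ) := by
    rw [hn2]
    push_cast [Nat.cast_sub (show 1 ≤ α3 by omega), Nat.cast_sub (show 1 ≤ α4 by omega)]
    ring
  have hN3 : (n3:ℤ) = ((α4:ℤ)-1)*((α1:ℤ)-1)*(α2:ℤ) + (α4:ℤ) := by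
    rw [hn3]
    push_cast [Nat.cast_sub (show 1 ≤ α4 by omega), Nat.cast_sub (show 1 ≤ α1 by omega)]
    ring
  have hN4 : (n4:ℤ) = ((α1:ℤ)-1)*((α2:ℤ)-1)*(α3:ℤ) + (α1:ℤ) := by
    rw [hn4]
    push_cast [Nat.cast_sub (show 1 ≤ α1 by omega), Nat.cast_sub (show 1 ≤ α2 by omega)]
    ring
  -- generator positivity
  have hn1p : 3 ≤ n1 := le_trans hA2 (hn1 ▸ Nat.le_add_left _ _)
  have hn2p : 3 ≤ n2 := le_trans hA3 (hn2 ▸ Nat.le_add_left _ _)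
  have hn3p : 3 ≤ n3 := le_trans hA4 (hn3 ▸ Nat.le_add_left _ _)
  have hn4p : 3 ≤ n4 := le_trans hA1 (hn4 ▸ Nat.le_add_left _ _)
  -- cyclic relations
  have R2 : (α2:ℤ)*(n2:ℤ) = (n1:ℤ) + ((α3:ℤ)-1)*(n3:ℤ) := by
    rw [hN1, hN2, hN3]; ring
  have R3 : (α3:ℤ)*(n3:ℤ) = (n2:ℤ) + ((α4:ℤ)-1)*(n4:ℤ) := by
    rw [hN2, hN3, hN4]; ring
  have R4 : (α4:ℤ)*(n4:ℤ) = (n3:ℤ) + ((α1:ℤ)-1)*(n1:ℤ) := by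
    rw [hN3, hN4, hN1]; ring
  -- f identities
  have hf2 : (f:ℤ) = ((α3:ℤ)-1)*(n3:ℤ) - (n2:ℤ) := by linear_combination hf + R2
  have hf3 : (f:ℤ) = ((α4:ℤ)-1)*(n4:ℤ) - (n3:ℤ) := by linear_combination hf2 + R3
  have hf4 : (f:ℤ) = ((α1:ℤ)-1)*(n1:ℤ) - (n4:ℤ) := by linear_combination hf3 + R4
  have hfp : 1 ≤ f := by
    have hz : (0:ℤ) < (f:ℤ) := by rw [hf, hN1, hN2]; nlinarith
    exact_mod_cast hz
  -- membership characterization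
  have memS : ∀ x:ℕ, x ∈ S.carrier ↔ ∃ p q r s : ℕ, x = p*n1+q*n2+r*n3+s*n4 := by
    intro x
    rw [hS]
    exact aux_mem_closure4 n1 n2 n3 n4 x
  -- n3, n4 coprime
  have cop34 : IsCoprime ((n4:ℕ):ℤ) ((n3:ℕ):ℤ) := by
    set g := Nat.gcd n3 n4 with hg
    have hg3 : (g:ℤ) ∣ (n3:ℤ) := Int.natCast_dvd_natCast.mpr (Nat.gcd_dvd_left _ _)
    have hg4 : (g:ℤ) ∣ (n4:ℤ) := Int.natCast_dvd_natCast.mpr (Nat.gcd_dvd_right _ _)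
    have hg2 : (g:ℤ) ∣ (n2:ℤ) := by
      have he : (n2:ℤ) = (α3:ℤ)*(n3:ℤ) - ((α4:ℤ)-1)*(n4:ℤ) := by linarith [R3]
      rw [he]
      exact dvd_sub (Dvd.dvd.mul_left hg3 _) (Dvd.dvd.mul_left hg4 _)
    have hg1' : (g:ℤ) ∣ (n1:ℤ) := by
      have he : (n1:ℤ) = (α2:ℤ)*(n2:ℤ) - ((α3:ℤ)-1)*(n3:ℤ) := by linarith [R2]
      rw [he]
      exact dvd_sub (Dvd.dvd.mul_left hg2 _) (Dvd.dvd.mul_left hg3 _)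
    have hgone : g = 1 := by
      have d1 : g ∣ n1 := Int.natCast_dvd_natCast.mp hg1'
      have d2 : g ∣ n2 := Int.natCast_dvd_natCast.mp hg2
      have d3 : g ∣ n3 := Nat.gcd_dvd_left _ _
      have d4 : g ∣ n4 := Nat.gcd_dvd_right _ _
      have : g ∣ Nat.gcd (Nat.gcd (Nat.gcd n1 n2) n3) n4 :=
        Nat.dvd_gcd (Nat.dvd_gcd (Nat.dvd_gcd d1 d2) d3) d4
      rw [hgcd] at this
      exact Nat.dvd_one.mp this
    rw [Int.isCoprime_iff_gcd_eq_one, Int.gcd_natCast_natCast, Nat.gcd_comm]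
    exact hgone
  -- instantiated lattice lemma
  have LAT : ∀ x1 x2 x3 x4 : ℤ, x1*(n1:ℤ) + x2*(n2:ℤ) + x3*(n3:ℤ) + x4*(n4:ℤ) = 0 →
      ∃ x y z : ℤ, x1 = (α1:ℤ)*x - y ∧ x2 = -((α2:ℤ)-1)*x + (α2:ℤ)*y - z ∧
        x3 = -((α3:ℤ)-1)*y + (α3:ℤ)*z ∧ x4 = -x - ((α4:ℤ)-1)*z := by
    intro x1 x2 x3 x4 h
    exact aux_lattice (α1:ℤ) (α2:ℤ) (α3:ℤ) (α4:ℤ) (n1:ℤ) (n2:ℤ) (n3:ℤ) (n4:ℤ)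
      hN1 hN2 hN3 hN4 (by positivity) cop34 x1 x2 x3 x4 h
    -- cast helpers
  have cm1 : ((α1-1:ℕ):ℤ) = (α1:ℤ)-1 := by omega
  have cm2 : ((α2-1:ℕ):ℤ) = (α2:ℤ)-1 := by omega
  have cm3 : ((α3-1:ℕ):ℤ) = (α3:ℤ)-1 := by omega
  have cm4 : ((α4-1:ℕ):ℤ) = (α4:ℤ)-1 := by omega
  have dm1 : ((α1-2:ℕ):ℤ) = (α1:ℤ)-2 := by omega
  have dm2 : ((α2-2:ℕ):ℤ) = (α2:ℤ)-2 := by omega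
  have dm3 : ((α3-2:ℕ):ℤ) = (α3:ℤ)-2 := by omega
  have dm4 : ((α4-2:ℕ):ℤ) = (α4:ℤ)-2 := by omega
  -- === key non-membership lemma ===
  have keyB : ∀ b c d : ℕ, b ≤ α2-1 → c ≤ α3-1 → d ≤ α4-1 →
      (c = α3-1 → d = 0) → (b = α2-1 → c = 0 ∧ d = 0) →
      ∀ u : ℕ, (u:ℤ) = (b:ℤ)*(n2:ℤ) + (c:ℤ)*(n3:ℤ) + (d:ℤ)*(n4:ℤ) - (n1:ℤ) →
      u ∉ S.carrier := by
    intro b c d hb hc hd hcd hbc u hu hmem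
    obtain ⟨p,q,r,s,hrep⟩ := (memS u).mp hmem
    have hcast : (p:ℤ)*(n1:ℤ)+(q:ℤ)*(n2:ℤ)+(r:ℤ)*(n3:ℤ)+(s:ℤ)*(n4:ℤ) = (u:ℤ) := by
      exact_mod_cast hrep.symm
    have h0 : ((p:ℤ)+1)*(n1:ℤ) + ((q:ℤ)-(b:ℤ))*(n2:ℤ) + ((r:ℤ)-(c:ℤ))*(n3:ℤ)
        + ((s:ℤ)-(d:ℤ))*(n4:ℤ) = 0 := by linear_combination hcast + hu
    obtain ⟨x,y,z,g1,g2,g3,g4⟩ := LAT _ _ _ _ h0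
    refine aux_lemB (α1:ℤ) (α2:ℤ) (α3:ℤ) (α4:ℤ) (b:ℤ) (c:ℤ) (d:ℤ) x y z
      (by linarith) (by linarith) (by linarith) (by linarith)
      (by positivity) (by omega) (by positivity) (by omega)
      (by positivity) (by omega)
      (fun h => by have hcc : c = α3-1 := by omega
                   have := hcd hcc; omega)
      (fun h => by have hbb : b = α2-1 := by omega
                   have := hbc hbb
                   constructor <;> omega)
      (by linarith [g1, Int.natCast_nonneg p])
      (by linarith [g2, Int.natCast_nonneg q])
      (by linarith [g3, Int.natCast_nonneg r])
      (by linarith [g4, Int.natCast_nonneg s])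
  -- === distinctness of family values mod n1 ===
  have keyC : ∀ b c d b' c' d' : ℕ,
      b ≤ α2-1 → c ≤ α3-1 → d ≤ α4-1 → (c = α3-1 → d = 0) → (b = α2-1 → c = 0 ∧ d = 0) →
      b' ≤ α2-1 → c' ≤ α3-1 → d' ≤ α4-1 → (c' = α3-1 → d' = 0) → (b' = α2-1 → c' = 0 ∧ d' = 0) →
      (b*n2+c*n3+d*n4) ≡ (b'*n2+c'*n3+d'*n4) [MOD n1] →
      b = b' ∧ c = c' ∧ d = d' := by
    intro b c d b' c' d' hb hc hd hcd hbc hb' hc' hd' hcd' hbc' hmod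
    obtain ⟨k, hk⟩ := hmod.dvd
    have hvz : ((b*n2+c*n3+d*n4 : ℕ):ℤ) = (b:ℤ)*(n2:ℤ)+(c:ℤ)*(n3:ℤ)+(d:ℤ)*(n4:ℤ) := by
      push_cast; ring
    have hvz' : ((b'*n2+c'*n3+d'*n4 : ℕ):ℤ) = (b':ℤ)*(n2:ℤ)+(c':ℤ)*(n3:ℤ)+(d':ℤ)*(n4:ℤ) := by
      push_cast; ring
    have h0 : k*(n1:ℤ) + ((b:ℤ)-(b':ℤ))*(n2:ℤ) + ((c:ℤ)-(c':ℤ))*(n3:ℤ)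
        + ((d:ℤ)-(d':ℤ))*(n4:ℤ) = 0 := by
      linear_combination hvz' - hvz - hk
    obtain ⟨x,y,z,g1,g2,g3,g4⟩ := LAT _ _ _ _ h0
    have hres := aux_lemC (α2:ℤ) (α3:ℤ) (α4:ℤ) (b:ℤ) (c:ℤ) (d:ℤ) (b':ℤ) (c':ℤ) (d':ℤ) x y z
      (by linarith) (by linarith) (by linarith)
      (by positivity) (by omega) (by positivity) (by omega) (by positivity) (by omega)
      (fun h => by have hcc : c = α3-1 := by omega
                   have := hcd hcc; omega)
      (fun h => by have hbb : b = α2-1 := by omega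
                   have := hbc hbb
                   constructor <;> omega)
      (by positivity) (by omega) (by positivity) (by omega) (by positivity) (by omega)
      (fun h => by have hcc : c' = α3-1 := by omega
                   have := hcd' hcc; omega)
      (fun h => by have hbb : b' = α2-1 := by omega
                   have := hbc' hbb
                   constructor <;> omega)
      g2 g3 g4
    obtain ⟨e1', e2', e3'⟩ := hres
    refine ⟨by exact_mod_cast e1', by exact_mod_cast e2', by exact_mod_cast e3'⟩
    -- === special value identities (ℕ) ===
  have idv1 : (α2-1)*n2 = f + n1 := by
    have h : (((α2-1)*n2 : ℕ):ℤ) = ((f + n1 : ℕ):ℤ) := by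
      push_cast [cm2]; linarith [hf]
    exact_mod_cast h
  have idv2 : (α2-2)*n2 + (α3-1)*n3 = 2*f + n1 := by
    have h : (((α2-2)*n2 + (α3-1)*n3 : ℕ):ℤ) = ((2*f + n1 : ℕ):ℤ) := by
      push_cast [dm2, cm3]; linarith [hf, hf2]
    exact_mod_cast h
  have idv3 : (α2-2)*n2 + (α3-2)*n3 + (α4-1)*n4 = 3*f + n1 := by
    have h : (((α2-2)*n2 + (α3-2)*n3 + (α4-1)*n4 : ℕ):ℤ) = ((3*f + n1 : ℕ):ℤ) := by
      push_cast [dm2, dm3, cm4]; linarith [hf, hf2, hf3]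
    exact_mod_cast h
  -- === the twelve membership facts kf + n_i ∈ S ===
  have mS : ∀ p q r s : ℕ, p*n1+q*n2+r*n3+s*n4 ∈ S.carrier :=
    fun p q r s => (memS _).mpr ⟨p,q,r,s,rfl⟩
  have m11 : f + n1 ∈ S.carrier := by
    have := mS 0 (α2-1) 0 0
    simpa [idv1] using this
  have natEq : ∀ u p q r s : ℕ,
      ((u:ℤ) = (p:ℤ)*(n1:ℤ)+(q:ℤ)*(n2:ℤ)+(r:ℤ)*(n3:ℤ)+(s:ℤ)*(n4:ℤ)) →
      u ∈ S.carrier := by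
    intro u p q r s h
    have : u = p*n1+q*n2+r*n3+s*n4 := by exact_mod_cast h
    rw [this]; exact mS p q r s
  have m12 : f + n2 ∈ S.carrier := by
    refine natEq _ 0 0 (α3-1) 0 ?_
    push_cast [cm3]; linarith [hf2]
  have m13 : f + n3 ∈ S.carrier := by
    refine natEq _ 0 0 0 (α4-1) ?_
    push_cast [cm4]; linarith [hf3]
  have m14 : f + n4 ∈ S.carrier := by
    refine natEq _ (α1-1) 0 0 0 ?_
    push_cast [cm1]; linarith [hf4]
  have m21 : 2*f + n1 ∈ S.carrier := by
    refine natEq _ 0 (α2-2) (α3-1) 0 ?_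
    push_cast [dm2, cm3]; linarith [hf, hf2]
  have m22 : 2*f + n2 ∈ S.carrier := by
    refine natEq _ 0 0 (α3-2) (α4-1) ?_
    push_cast [dm3, cm4]; linarith [hf2, hf3]
  have m23 : 2*f + n3 ∈ S.carrier := by
    refine natEq _ (α1-1) 0 0 (α4-2) ?_
    push_cast [cm1, dm4]; linarith [hf3, hf4]
  have m24 : 2*f + n4 ∈ S.carrier := by
    refine natEq _ (α1-2) (α2-1) 0 0 ?_
    push_cast [dm1, cm2]; linarith [hf4, hf]
  have m31 : 3*f + n1 ∈ S.carrier := by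
    refine natEq _ 0 (α2-2) (α3-2) (α4-1) ?_
    push_cast [dm2, dm3, cm4]; linarith [hf, hf2, hf3]
  have m32 : 3*f + n2 ∈ S.carrier := by
    refine natEq _ (α1-1) 0 (α3-2) (α4-2) ?_
    push_cast [cm1, dm3, dm4]; linarith [hf2, hf3, hf4]
  have m33 : 3*f + n3 ∈ S.carrier := by
    refine natEq _ (α1-2) (α2-1) 0 (α4-2) ?_
    push_cast [dm1, cm2, dm4]; linarith [hf3, hf4, hf]
  have m34 : 3*f + n4 ∈ S.carrier := by
    refine natEq _ (α1-2) (α2-2) (α3-1) 0 ?_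
    push_cast [dm1, dm2, cm3]; linarith [hf4, hf, hf2]
  -- === kf ∉ S ===
  have fnot : f ∉ S.carrier := by
    refine keyB (α2-1) 0 0 (le_refl _) (by omega) (by omega)
      (fun h => rfl) (fun _ => ⟨rfl, rfl⟩) f ?_
    push_cast [cm2]; linarith [hf]
  have f2not : 2*f ∉ S.carrier := by
    refine keyB (α2-2) (α3-1) 0 (by omega) (le_refl _) (by omega)
      (fun _ => rfl) (fun h => absurd h (by omega)) (2*f) ?_
    push_cast [dm2, cm3]; linarith [hf, hf2]
  have f3not : 3*f ∉ S.carrier := by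
    refine keyB (α2-2) (α3-2) (α4-1) (by omega) (by omega) (le_refl _)
      (fun h => absurd h (by omega)) (fun h => absurd h (by omega)) (3*f) ?_
    push_cast [dm2, dm3, cm4]; linarith [hf, hf2, hf3]
  -- === PF ⊇ helper ===
  have pfmem : ∀ g : ℕ, g + n1 ∈ S.carrier → g + n2 ∈ S.carrier →
      g + n3 ∈ S.carrier → g + n4 ∈ S.carrier → g ∉ S.carrier → g ∈ S.PF := by
    intro g h1 h2 h3 h4 h5
    refine ⟨h5, ?_⟩
    intro s hs hs0
    obtain ⟨p,q,r,t,rfl⟩ := (memS s).mp hs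
    rcases p with _ | p
    · rcases q with _ | q
      · rcases r with _ | r
        · rcases t with _ | t
          · simp at hs0
          · have he : g + (0*n1+0*n2+0*n3+(t+1)*n4) = (g+n4) + (0*n1+0*n2+0*n3+t*n4) := by ring
            rw [he]; exact S.add_mem h4 (mS 0 0 0 t)
        · have he : g + (0*n1+0*n2+(r+1)*n3+t*n4) = (g+n3) + (0*n1+0*n2+r*n3+t*n4) := by ring
          rw [he]; exact S.add_mem h3 (mS 0 0 r t)
      · have he : g + (0*n1+(q+1)*n2+r*n3+t*n4) = (g+n2) + (0*n1+q*n2+r*n3+t*n4) := by ring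
        rw [he]; exact S.add_mem h2 (mS 0 q r t)
    · have he : g + ((p+1)*n1+q*n2+r*n3+t*n4) = (g+n1) + (p*n1+q*n2+r*n3+t*n4) := by ring
      rw [he]; exact S.add_mem h1 (mS p q r t)
  have pf1 : f ∈ S.PF := pfmem f m11 m12 m13 m14 fnot
  have pf2 : 2*f ∈ S.PF := pfmem (2*f) m21 m22 m23 m24 f2not
  have pf3 : 3*f ∈ S.PF := pfmem (3*f) m31 m32 m33 m34 f3not
    -- === family finset ===
  set Fs : Finset (ℕ × ℕ × ℕ) :=
    ((Finset.range (α2-1)) ×ˢ (Finset.range (α3-1)) ×ˢ (Finset.range α4)) ∪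
    ((Finset.range (α2-1)).image (fun b => (b, α3-1, 0))) ∪ {(α2-1, 0, 0)} with hFs
  have memFs : ∀ w : ℕ × ℕ × ℕ, w ∈ Fs ↔
      ((w.1 < α2-1 ∧ w.2.1 < α3-1 ∧ w.2.2 < α4) ∨
       (w.1 < α2-1 ∧ w.2.1 = α3-1 ∧ w.2.2 = 0) ∨ w = (α2-1, 0, 0)) := by
    rintro ⟨b, c, d⟩
    simp only [hFs, Finset.mem_union, Finset.mem_product, Finset.mem_image,
      Finset.mem_range, Finset.mem_singleton, Prod.ext_iff, Prod.mk.injEq]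
    constructor
    · rintro ((⟨h1, h2, h3⟩ | ⟨a, ha, h1, h2, h3⟩) | ⟨h1, h2, h3⟩)
      · exact Or.inl ⟨h1, h2, h3⟩
      · exact Or.inr (Or.inl ⟨by omega, by omega, by omega⟩)
      · exact Or.inr (Or.inr ⟨h1, h2, h3⟩)
    · rintro (⟨h1, h2, h3⟩ | ⟨h1, h2, h3⟩ | ⟨h1, h2, h3⟩)
      · exact Or.inl (Or.inl ⟨h1, h2, h3⟩)
      · exact Or.inl (Or.inr ⟨b, h1, rfl, h2.symm, h3.symm⟩)
      · exact Or.inr ⟨h1, h2, h3⟩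
  have famcond : ∀ b c d : ℕ, (b, c, d) ∈ Fs →
      b ≤ α2-1 ∧ c ≤ α3-1 ∧ d ≤ α4-1 ∧
      (c = α3-1 → d = 0) ∧ (b = α2-1 → c = 0 ∧ d = 0) := by
    intro b c d hw
    have h := (memFs (b, c, d)).mp hw
    simp only [Prod.ext_iff, Prod.mk.injEq] at h
    omega
  have cardFs : Fs.card = n1 := by
    have hd1 : Disjoint
        ((Finset.range (α2-1)) ×ˢ (Finset.range (α3-1)) ×ˢ (Finset.range α4))
        ((Finset.range (α2-1)).image (fun b => (b, α3-1, 0))) := by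
      rw [Finset.disjoint_left]
      rintro ⟨b, c, d⟩ hw hw2
      simp only [Finset.mem_product, Finset.mem_range] at hw
      simp only [Finset.mem_image, Finset.mem_range, Prod.mk.injEq] at hw2
      obtain ⟨a, _, _, h2, _⟩ := hw2
      omega
    have hd2 : Disjoint
        (((Finset.range (α2-1)) ×ˢ (Finset.range (α3-1)) ×ˢ (Finset.range α4)) ∪
         ((Finset.range (α2-1)).image (fun b => (b, α3-1, 0))))
        ({(α2-1, 0, 0)} : Finset (ℕ × ℕ × ℕ)) := by
      rw [Finset.disjoint_right]
      rintro ⟨b, c, d⟩ hw hw2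
      simp only [Finset.mem_singleton, Prod.mk.injEq] at hw
      simp only [Finset.mem_union, Finset.mem_product, Finset.mem_image,
        Finset.mem_range, Prod.mk.injEq] at hw2
      rcases hw2 with ⟨h1, _, _⟩ | ⟨a, _, _, h2, _⟩ <;> omega
    have c1 : (((Finset.range (α2-1)) ×ˢ (Finset.range (α3-1)) ×ˢ (Finset.range α4))).card
        = (α2-1) * ((α3-1) * α4) := by
      simp [Finset.card_product]
    have c2 : ((Finset.range (α2-1)).image (fun b => (b, α3-1, 0))).card = α2-1 := by
      rw [Finset.card_image_of_injective _ (fun a b h => by simpa using congrArg Prod.fst h),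
        Finset.card_range]
    rw [hFs, Finset.card_union_of_disjoint hd2, Finset.card_union_of_disjoint hd1, c1, c2,
      Finset.card_singleton, hn1, ← Nat.mul_assoc]
    have h1 : α2 - 1 + 1 = α2 := by omega
    rw [add_assoc, h1]
  -- === surjectivity mod n1 ===
  haveI : NeZero n1 := ⟨by omega⟩
  have surj : ∀ x : ℕ, ∃ b c d : ℕ, (b, c, d) ∈ Fs ∧ (b*n2 + c*n3 + d*n4) ≡ x [MOD n1] := by
    have hinj : Set.InjOn (fun w : ℕ × ℕ × ℕ => ((w.1*n2 + w.2.1*n3 + w.2.2*n4 : ℕ) : ZMod n1))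
        ↑Fs := by
      rintro ⟨b, c, d⟩ hw ⟨b', c', d'⟩ hw' h
      have hmod : (b*n2 + c*n3 + d*n4) ≡ (b'*n2 + c'*n3 + d'*n4) [MOD n1] :=
        (ZMod.natCast_eq_natCast_iff _ _ _).mp h
      obtain ⟨e1, e2, e3, e4, e5⟩ := famcond b c d hw
      obtain ⟨e1', e2', e3', e4', e5'⟩ := famcond b' c' d' hw'
      obtain ⟨q1, q2, q3⟩ := keyC b c d b' c' d' e1 e2 e3 e4 e5 e1' e2' e3' e4' e5' hmod
      simp only [Prod.mk.injEq]
      exact ⟨q1, q2, q3⟩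
    have himg : (Fs.image (fun w : ℕ × ℕ × ℕ =>
        ((w.1*n2 + w.2.1*n3 + w.2.2*n4 : ℕ) : ZMod n1))).card = Fintype.card (ZMod n1) := by
      rw [Finset.card_image_of_injOn hinj, cardFs, ZMod.card]
    have huniv : Fs.image (fun w : ℕ × ℕ × ℕ =>
        ((w.1*n2 + w.2.1*n3 + w.2.2*n4 : ℕ) : ZMod n1)) = Finset.univ :=
      Finset.eq_univ_of_card _ himg
    intro x
    have hx : (x : ZMod n1) ∈ Fs.image (fun w : ℕ × ℕ × ℕ =>
        ((w.1*n2 + w.2.1*n3 + w.2.2*n4 : ℕ) : ZMod n1)) := by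
      rw [huniv]; exact Finset.mem_univ _
    obtain ⟨w, hw, hgw⟩ := Finset.mem_image.mp hx
    obtain ⟨b, c, d⟩ := w
    exact ⟨b, c, d, hw, (ZMod.natCast_eq_natCast_iff _ _ _).mp hgw⟩
  -- === value bound ===
  have valB : ∀ b c d : ℕ, (b, c, d) ∈ Fs → b*n2 + c*n3 + d*n4 ≤ 3*f + n1 := by
    intro b c d hw
    obtain ⟨e1, e2, e3, e4, e5⟩ := famcond b c d hw
    have idz1 : (f:ℤ) + (n1:ℤ) = ((α2:ℤ)-1)*(n2:ℤ) := by linarith only [hf]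
    have idz2 : 2*(f:ℤ) + (n1:ℤ) = ((α2:ℤ)-2)*(n2:ℤ) + ((α3:ℤ)-1)*(n3:ℤ) := by
      linarith only [hf, hf2]
    have idz3 : 3*(f:ℤ) + (n1:ℤ) = ((α2:ℤ)-2)*(n2:ℤ) + ((α3:ℤ)-2)*(n3:ℤ) + ((α4:ℤ)-1)*(n4:ℤ) := by
      linarith only [hf, hf2, hf3]
    have hZ : (b:ℤ)*(n2:ℤ) + (c:ℤ)*(n3:ℤ) + (d:ℤ)*(n4:ℤ) ≤ 3*(f:ℤ) + (n1:ℤ) := by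
      have hn2z : (0:ℤ) ≤ (n2:ℤ) := by positivity
      have hn3z : (0:ℤ) ≤ (n3:ℤ) := by positivity
      have hn4z : (0:ℤ) ≤ (n4:ℤ) := by positivity
      have hfz : (0:ℤ) ≤ (f:ℤ) := by positivity
      by_cases hb : b = α2-1
      · obtain ⟨hc0, hd0⟩ := e5 hb
        subst hb; subst hc0; subst hd0
        rw [cm2]
        push_cast
        linarith only [idz1, hfz]
      · have hbz : (b:ℤ) ≤ (α2:ℤ)-2 := by omega
        by_cases hc : c = α3-1
        · have hd0 := e4 hc
          subst hc; subst hd0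
          have h1 := mul_le_mul_of_nonneg_right hbz hn2z
          rw [cm3]
          push_cast
          linarith only [idz2, hfz, h1]
        · have hcz : (c:ℤ) ≤ (α3:ℤ)-2 := by omega
          have hdz : (d:ℤ) ≤ (α4:ℤ)-1 := by omega
          have h1 := mul_le_mul_of_nonneg_right hbz hn2z
          have h2 := mul_le_mul_of_nonneg_right hcz hn3z
          have h3 := mul_le_mul_of_nonneg_right hdz hn4z
          linarith only [idz3, h1, h2, h3]
    have : ((b*n2 + c*n3 + d*n4 : ℕ):ℤ) ≤ ((3*f + n1 : ℕ):ℤ) := by push_cast; linarith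
    exact_mod_cast this
    -- === everything above 3f is in S ===
  have bigmem : ∀ x : ℕ, 3*f < x → x ∈ S.carrier := by
    intro x hx
    obtain ⟨b, c, d, hw, hmod⟩ := surj x
    rcases le_or_gt (b*n2+c*n3+d*n4) x with h | h
    · obtain ⟨m, hm⟩ := (Nat.modEq_iff_dvd' h).mp hmod
      have hx2 : x = n1*m + (b*n2+c*n3+d*n4) := (Nat.sub_eq_iff_eq_add h).mp hm
      exact (memS x).mpr ⟨m, b, c, d, by rw [hx2]; ring⟩
    · exfalso
      obtain ⟨m, hm⟩ := (Nat.modEq_iff_dvd' h.le).mp hmod.symm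
      have hveq : b*n2+c*n3+d*n4 = n1*m + x := (Nat.sub_eq_iff_eq_add h.le).mp hm
      have hm1 : 1 ≤ m := by
        rcases Nat.eq_zero_or_pos m with h0 | h0
        · subst h0; simp at hveq; omega
        · exact h0
      have hvb := valB b c d hw
      have hnm : n1 ≤ n1 * m := Nat.le_mul_of_pos_right n1 hm1
      linarith [hveq, hvb, hx]
  -- === Frobenius number ===
  have h3fgap : 3*f ∈ S.carrierᶜ := f3not
  have hub : ∀ x ∈ S.carrierᶜ, x ≤ 3*f := by
    intro x hx
    by_contra h
    push_neg at h
    exact hx (bigmem x h)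
  have hfrob : S.frob = 3*f := IsGreatest.csSup_eq ⟨h3fgap, hub⟩
  -- === gaps whose translate by n1 lies in S come from the family ===
  have gapfam : ∀ x : ℕ, x ∉ S.carrier → x + n1 ∈ S.carrier →
      ∃ b c d, (b, c, d) ∈ Fs ∧ b*n2+c*n3+d*n4 = x + n1 := by
    intro x hx hx1
    obtain ⟨b, c, d, hw, hmod⟩ := surj x
    rcases le_or_gt (b*n2+c*n3+d*n4) x with h | h
    · exfalso
      obtain ⟨m, hm⟩ := (Nat.modEq_iff_dvd' h).mp hmod
      have hx2 : x = n1*m + (b*n2+c*n3+d*n4) := (Nat.sub_eq_iff_eq_add h).mp hm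
      exact hx ((memS x).mpr ⟨m, b, c, d, by rw [hx2]; ring⟩)
    · obtain ⟨m, hm⟩ := (Nat.modEq_iff_dvd' h.le).mp hmod.symm
      have hveq : b*n2+c*n3+d*n4 = n1*m + x := (Nat.sub_eq_iff_eq_add h.le).mp hm
      have hm1 : 1 ≤ m := by
        rcases Nat.eq_zero_or_pos m with h0 | h0
        · subst h0; simp at hveq; omega
        · exact h0
      rcases Nat.lt_or_ge m 2 with hm2 | hm2
      · have hm' : m = 1 := by omega
        subst hm'
        exact ⟨b, c, d, hw, by rw [hveq]; ring⟩
      · exfalso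
        obtain ⟨e1, e2, e3, e4, e5⟩ := famcond b c d hw
        have hu : ((x + n1 + (m-2)*n1 : ℕ):ℤ) =
            (b:ℤ)*(n2:ℤ)+(c:ℤ)*(n3:ℤ)+(d:ℤ)*(n4:ℤ) - (n1:ℤ) := by
          have hz : ((b*n2+c*n3+d*n4 : ℕ):ℤ) = (b:ℤ)*(n2:ℤ)+(c:ℤ)*(n3:ℤ)+(d:ℤ)*(n4:ℤ) := by
            push_cast; ring
          have hz2 : ((b*n2+c*n3+d*n4 : ℕ):ℤ) = (n1:ℤ)*(m:ℤ) + (x:ℤ) := by exact_mod_cast hveq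
          have hm2z : ((m-2:ℕ):ℤ) = (m:ℤ)-2 := by omega
          push_cast [hm2z]
          linarith [hz, hz2]
        have hmem2 : x + n1 + (m-2)*n1 ∈ S.carrier := by
          have he : x + n1 + (m-2)*n1 = (x + n1) + ((m-2)*n1+0*n2+0*n3+0*n4) := by ring
          rw [he]
          exact S.add_mem hx1 (mS (m-2) 0 0 0)
        exact keyB b c d e1 e2 e3 e4 e5 _ hu hmem2
  -- === PF upper bound ===
  have PFsub : ∀ x : ℕ, x ∈ S.PF → x = f ∨ x = 2*f ∨ x = 3*f := by
    intro x hxpf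
    obtain ⟨hxn, hxadd⟩ := hxpf
    have hx1 : x + n1 ∈ S.carrier := hxadd n1 (by simpa using mS 1 0 0 0) (by omega)
    obtain ⟨b, c, d, hw, hveq⟩ := gapfam x hxn hx1
    obtain ⟨e1, e2, e3, e4, e5⟩ := famcond b c d hw
    have hveqZ : (b:ℤ)*(n2:ℤ)+(c:ℤ)*(n3:ℤ)+(d:ℤ)*(n4:ℤ) = (x:ℤ) + (n1:ℤ) := by
      exact_mod_cast hveq
    by_cases hb : b = α2-1
    · obtain ⟨hc0, hd0⟩ := e5 hb
      subst hb; subst hc0; subst hd0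
      left
      have h1 : f + n1 = x + n1 := by
        have : ((f + n1 : ℕ):ℤ) = ((x + n1 : ℕ):ℤ) := by
          push_cast [cm2] at hveqZ ⊢
          linarith [hf, hveqZ]
        exact_mod_cast this
      omega
    · by_cases hc : c = α3-1
      · have hd0 := e4 hc
        subst hc; subst hd0
        by_cases hb2 : b = α2-2
        · subst hb2
          right; left
          have h1 : 2*f + n1 = x + n1 := by
            have : ((2*f + n1 : ℕ):ℤ) = ((x + n1 : ℕ):ℤ) := by
              push_cast [cm3, dm2] at hveqZ ⊢
              linarith [hf, hf2, hveqZ]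
            exact_mod_cast this
          omega
        · exfalso
          have hu : ((x + n2 : ℕ):ℤ) =
              ((b+1:ℕ):ℤ)*(n2:ℤ)+((α3-1:ℕ):ℤ)*(n3:ℤ)+((0:ℕ):ℤ)*(n4:ℤ) - (n1:ℤ) := by
            push_cast [cm3] at hveqZ ⊢
            linarith [hveqZ]
          exact keyB (b+1) (α3-1) 0 (by omega) (by omega) (by omega) (fun _ => rfl)
            (fun h => absurd h (by omega)) _ hu
            (hxadd n2 (by simpa using mS 0 1 0 0) (by omega))
      · by_cases hd : d = α4-1
        · by_cases hc3 : c = α3-2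
          · by_cases hb3 : b = α2-2
            · subst hd; subst hc3; subst hb3
              right; right
              have h1 : 3*f + n1 = x + n1 := by
                have : ((3*f + n1 : ℕ):ℤ) = ((x + n1 : ℕ):ℤ) := by
                  push_cast [cm4, dm2, dm3] at hveqZ ⊢
                  linarith [hf, hf2, hf3, hveqZ]
                exact_mod_cast this
              omega
            · exfalso
              have hu : ((x + n2 : ℕ):ℤ) =
                  ((b+1:ℕ):ℤ)*(n2:ℤ)+(c:ℤ)*(n3:ℤ)+(d:ℤ)*(n4:ℤ) - (n1:ℤ) := by
                push_cast at hveqZ ⊢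
                linarith [hveqZ]
              exact keyB (b+1) c d (by omega) (by omega) (by omega)
                (fun h => absurd h (by omega)) (fun h => absurd h (by omega)) _ hu
                (hxadd n2 (by simpa using mS 0 1 0 0) (by omega))
          · exfalso
            have hu : ((x + n3 : ℕ):ℤ) =
                (b:ℤ)*(n2:ℤ)+((c+1:ℕ):ℤ)*(n3:ℤ)+(d:ℤ)*(n4:ℤ) - (n1:ℤ) := by
              push_cast at hveqZ ⊢
              linarith [hveqZ]
            exact keyB b (c+1) d (by omega) (by omega) (by omega)
              (fun h => absurd h (by omega)) (fun h => absurd h (by omega)) _ hu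
              (hxadd n3 (by simpa using mS 0 0 1 0) (by omega))
        · exfalso
          have hu : ((x + n4 : ℕ):ℤ) =
              (b:ℤ)*(n2:ℤ)+(c:ℤ)*(n3:ℤ)+((d+1:ℕ):ℤ)*(n4:ℤ) - (n1:ℤ) := by
            push_cast at hveqZ ⊢
            linarith [hveqZ]
          exact keyB b c (d+1) (by omega) (by omega) (by omega)
            (fun h => absurd h (by omega)) (fun h => absurd h (by omega)) _ hu
            (hxadd n4 (by simpa using mS 0 0 0 1) (by omega))
  -- === conclusion ===
  refine ⟨?_, hfrob, by linarith [hf, hf2]⟩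
  ext x
  simp only [Set.mem_insert_iff, Set.mem_singleton_iff]
  constructor
  · intro hx
    exact PFsub x hx
  · rintro (rfl | rfl | rfl)
    · exact pf1
    · exact pf2
    · exact pf3
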